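/- For every n ≥ 1 there exists a constant C_n > 0, depending only on n, with the following property: for every N ≥ 1 and every symmetric n-multilinear map A : (ℝ^N)^n → ℝ, one has Σ_{i_1=1}^N ⋯ Σ_{i_n=1}^N A(e_{i_1}, …, e_{i_n})² ≤ C_n ∫_{ℝ^N} A(ξ, ξ, …, ξ)² dγ_N(ξ), where γ_N denotes the standard Gaussian measure on ℝ^N (the N-fold product of the standard normal distribution on ℝ) and e_1, …, e_N is the standard orthonormal basis of ℝ^N. -/

import Mathlib

open MeasureTheory ProbabilityTheory Polynomial Real ENNReal NNReal

noncomputable section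

namespace WienerAux15

/-- integral of a polynomial against the standard Gaussian measure -/
def J (p : Polynomial ℝ) : ℝ := ∫ x, p.eval x ∂(gaussianReal 0 1)

lemma integrable_npow_mul_gauss (m : ℕ) :
    Integrable (fun x : ℝ => x ^ m * Real.exp (-(x ^ 2 / 2))) := by
  have h := integrable_rpow_mul_exp_neg_mul_sq (b := 1/2) (by norm_num) (s := m)
    (lt_of_lt_of_le (by norm_num) (Nat.cast_nonneg m))
  have : (fun x : ℝ => x ^ (m : ℝ) * Real.exp (-(1/2) * x ^ 2))
      = fun x : ℝ => x ^ m * Real.exp (-(x ^ 2 / 2)) := by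
    funext x; rw [Real.rpow_natCast]; ring_nf
  rwa [this] at h

lemma integrable_poly_mul_gauss (p : Polynomial ℝ) :
    Integrable (fun x : ℝ => p.eval x * Real.exp (-(x ^ 2 / 2))) := by
  have : (fun x : ℝ => p.eval x * Real.exp (-(x ^ 2 / 2)))
      = fun x : ℝ => ∑ i ∈ Finset.range (p.natDegree + 1),
          p.coeff i * (x ^ i * Real.exp (-(x ^ 2 / 2))) := by
    funext x
    rw [Polynomial.eval_eq_sum_range, Finset.sum_mul]
    simp [mul_assoc]
  rw [this]
  exact integrable_finset_sum _ fun i _ => (integrable_npow_mul_gauss i).const_mul _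

lemma gaussianPDFReal_zero_one (x : ℝ) :
    gaussianPDFReal 0 1 x = (Real.sqrt (2 * π))⁻¹ * Real.exp (-(x ^ 2 / 2)) := by
  simp only [gaussianPDFReal, NNReal.coe_one, mul_one, sub_zero]
  rw [neg_div]

lemma gaussianPDF_eq' : gaussianPDF 0 1
    = fun x => ((gaussianPDFReal 0 1 x).toNNReal : ℝ≥0∞) := rfl

lemma integral_gaussian_eq (f : ℝ → ℝ) :
    ∫ x, f x ∂(gaussianReal 0 1)
      = ∫ x, gaussianPDFReal 0 1 x * f x := by
  rw [gaussianReal_of_var_ne_zero _ one_ne_zero, gaussianPDF_eq',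
    integral_withDensity_eq_integral_smul
    ((measurable_gaussianPDFReal 0 1).real_toNNReal)]
  congr 1; funext x
  simp [NNReal.smul_def, Real.coe_toNNReal _ (gaussianPDFReal_nonneg 0 1 x)]

lemma integrable_gaussian_iff (f : ℝ → ℝ) :
    Integrable f (gaussianReal 0 1)
      ↔ Integrable (fun x => gaussianPDFReal 0 1 x * f x) := by
  rw [gaussianReal_of_var_ne_zero _ one_ne_zero, gaussianPDF_eq',
    integrable_withDensity_iff_integrable_smul
    ((measurable_gaussianPDFReal 0 1).real_toNNReal)]
  constructor <;> intro h <;> refine h.congr (Filter.Eventually.of_forall fun x => ?_) <;>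
    simp [NNReal.smul_def, Real.coe_toNNReal _ (gaussianPDFReal_nonneg 0 1 x)]

lemma integrable_poly (p : Polynomial ℝ) :
    Integrable (fun x => p.eval x) (gaussianReal 0 1) := by
  rw [integrable_gaussian_iff]
  have : (fun x => gaussianPDFReal 0 1 x * p.eval x)
      = fun x => (Real.sqrt (2 * π))⁻¹ * (p.eval x * Real.exp (-(x ^ 2 / 2))) := by
    funext x; rw [gaussianPDFReal_zero_one]; ring
  rw [this]
  exact (integrable_poly_mul_gauss p).const_mul _


lemma J_sum {ι : Type*} (s : Finset ι) (f : ι → Polynomial ℝ) :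
    J (∑ i ∈ s, f i) = ∑ i ∈ s, J (f i) := by
  unfold J
  simp only [eval_finset_sum]
  exact integral_finset_sum s fun i _ => integrable_poly (f i)

lemma J_smul (a : ℝ) (p : Polynomial ℝ) : J (C a * p) = a * J p := by
  unfold J
  simp only [eval_mul, eval_C]
  exact integral_const_mul a _

lemma J_sub (p q : Polynomial ℝ) : J (p - q) = J p - J q := by
  unfold J
  simp only [eval_sub]
  exact integral_sub (integrable_poly p) (integrable_poly q)

lemma J_add (p q : Polynomial ℝ) : J (p + q) = J p + J q := by
  have hneg : J (-q) = -J q := by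
    have := J_smul (-1) q
    rw [show C (-1:ℝ) * q = -q by simp] at this
    rw [this]; ring
  rw [show p + q = p - (-q) by ring, J_sub, hneg]
  ring

lemma J_one : J 1 = 1 := by
  unfold J
  simp

/-- Gaussian integration by parts for polynomials. -/
lemma J_ibp (p : Polynomial ℝ) : J (X * p) = J (derivative p) := by
  have key : ∫ x, eval x (X * p - derivative p) * Real.exp (-(x ^ 2 / 2)) = 0 := by
    have hF : ∀ x : ℝ, HasDerivAt (fun y => eval y p * Real.exp (-(y ^ 2 / 2)))
        (-(eval x (X * p - derivative p) * Real.exp (-(x ^ 2 / 2)))) x := by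
      intro x
      have h1 : HasDerivAt (fun y : ℝ => eval y p) (eval x (derivative p)) x :=
        p.hasDerivAt x
      have h2 : HasDerivAt (fun y : ℝ => Real.exp (-(y ^ 2 / 2)))
          (-x * Real.exp (-(x ^ 2 / 2))) x := by
        have hq : HasDerivAt (fun y : ℝ => -(y ^ 2 / 2)) (-x) x := by
          have := ((hasDerivAt_pow 2 x).div_const 2).neg
          refine this.congr_deriv ?_
          norm_num
        simpa [mul_comm] using hq.exp
      have := h1.mul h2
      refine this.congr_deriv ?_
      simp [eval_mul, eval_sub]
      ring
    have hint : Integrable (fun x => -(eval x (X * p - derivative p) *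
        Real.exp (-(x ^ 2 / 2)))) := (integrable_poly_mul_gauss _).neg
    have hint2 : Integrable (fun x => eval x p * Real.exp (-(x ^ 2 / 2))) :=
      integrable_poly_mul_gauss p
    have h0 := integral_eq_zero_of_hasDerivAt_of_integrable hF hint hint2
    rw [integral_neg] at h0
    linarith
  have : J (X * p - derivative p) = 0 := by
    unfold J
    rw [integral_gaussian_eq]
    have : (fun x => gaussianPDFReal 0 1 x * eval x (X * p - derivative p))
        = fun x => (Real.sqrt (2 * π))⁻¹ *
            (eval x (X * p - derivative p) * Real.exp (-(x ^ 2 / 2))) := by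
      funext x; rw [gaussianPDFReal_zero_one]; ring
    rw [this, integral_const_mul, key, mul_zero]
  have h2 := J_sub (X * p) (derivative p)
  rw [this] at h2
  linarith

/-- The Hermite polynomial, cast to `ℝ[X]`. -/
def Hr (k : ℕ) : Polynomial ℝ := (hermite k).map (Int.castRingHom ℝ)

lemma Hr_zero : Hr 0 = 1 := by
  simp [Hr, hermite_zero]

lemma Hr_succ (k : ℕ) : Hr (k + 1) = X * Hr k - derivative (Hr k) := by
  unfold Hr
  rw [hermite_succ, Polynomial.map_sub, Polynomial.map_mul, Polynomial.map_X, derivative_map]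

lemma Hr_coeff (k m : ℕ) : (Hr k).coeff m = ((hermite k).coeff m : ℝ) := by
  simp [Hr, coeff_map]

lemma Hr_natDegree_le (k : ℕ) : (Hr k).natDegree ≤ k := by
  refine le_trans natDegree_map_le (le_of_eq natDegree_hermite)

/-- Moments of Hermite polynomials against the Gaussian. -/
lemma J_pow_mul_hermite : ∀ k m : ℕ, m ≤ k →
    J (X ^ m * Hr k) = if m = k then (Nat.factorial k : ℝ) else 0 := by
  intro k
  induction k with
  | zero =>
    intro m hm
    interval_cases m
    simp [Hr_zero, J_one]
  | succ k ih =>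
    intro m hm
    have hder : derivative ((X : Polynomial ℝ) ^ m * Hr k)
        = C (m : ℝ) * (X ^ (m - 1) * Hr k) + X ^ m * derivative (Hr k) := by
      rw [derivative_mul, derivative_X_pow]
      ring
    calc J (X ^ m * Hr (k + 1))
        = J (X ^ m * (X * Hr k)) - J (X ^ m * derivative (Hr k)) := by
          rw [Hr_succ]
          rw [show (X:Polynomial ℝ) ^ m * (X * Hr k - derivative (Hr k))
            = X ^ m * (X * Hr k) - X ^ m * derivative (Hr k) by ring]
          exact J_sub _ _
      _ = (m : ℝ) * J (X ^ (m - 1) * Hr k) := by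
          rw [show (X:Polynomial ℝ) ^ m * (X * Hr k) = X * (X ^ m * Hr k) by ring,
            J_ibp, hder, J_add, J_smul]
          ring
      _ = if m = k + 1 then (Nat.factorial (k + 1) : ℝ) else 0 := by
          rcases Nat.eq_zero_or_pos m with hm0 | hm0
          · subst hm0
            simp
          · have hm1 : m - 1 ≤ k := by omega
            rw [ih (m - 1) hm1]
            by_cases he : m = k + 1
            · subst he
              rw [show k + 1 - 1 = k from rfl, if_pos rfl, if_pos rfl]
              push_cast [Nat.factorial_succ]
              ring
            · have : ¬(m - 1 = k) := by omega
              simp [he, this]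

/-- Orthogonality of Hermite polynomials. -/
lemma J_hermite_mul_hermite (j k : ℕ) :
    J (Hr j * Hr k) = if j = k then (Nat.factorial k : ℝ) else 0 := by
  have main : ∀ j k : ℕ, j ≤ k →
      J (Hr j * Hr k) = if j = k then (Nat.factorial k : ℝ) else 0 := by
    intro j k hjk
    have hexp : Hr j = ∑ m ∈ Finset.range (j + 1), C ((Hr j).coeff m) * X ^ m := by
      conv_lhs => rw [(Hr j).as_sum_range' (j + 1) (by
        have := Hr_natDegree_le j; omega)]
      exact Finset.sum_congr rfl fun m _ => by rw [C_mul_X_pow_eq_monomial]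
    calc J (Hr j * Hr k)
        = ∑ m ∈ Finset.range (j + 1), (Hr j).coeff m * J (X ^ m * Hr k) := by
          conv_lhs => rw [hexp, Finset.sum_mul]
          rw [J_sum]
          exact Finset.sum_congr rfl fun m _ => by
            rw [show C ((Hr j).coeff m) * X ^ m * Hr k
              = C ((Hr j).coeff m) * (X ^ m * Hr k) by ring, J_smul]
      _ = if j = k then (Nat.factorial k : ℝ) else 0 := by
          rw [Finset.sum_congr rfl (fun m hm => by
            rw [J_pow_mul_hermite k m (by
              simp only [Finset.mem_range] at hm; omega)])]
          by_cases he : j = k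
          · subst he
            rw [Finset.sum_eq_single j, if_pos rfl, Hr_coeff, coeff_hermite_self]
            · simp
            · intro m _ hmj
              have : ¬ (m = j) := hmj
              simp [this]
            · intro h; exact absurd (Finset.self_mem_range_succ j) h
          · rw [if_neg he, Finset.sum_eq_zero]
            intro m hm
            simp only [Finset.mem_range] at hm
            have : ¬(m = k) := by omega
            simp [this]
  rcases le_total j k with h | h
  · exact main j k h
  · rw [mul_comm, main k j h]
    by_cases he : j = k
    · subst he; simp
    · simp [he, Ne.symm he]


/-- standard Gaussian product measure on `ℝ^N` -/
def Γ (N : ℕ) : Measure (Fin N → ℝ) := Measure.pi fun _ => gaussianReal 0 1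

lemma integrable_prod_eval {N : ℕ} (q : Fin N → Polynomial ℝ) :
    Integrable (fun ξ : Fin N → ℝ => ∏ i, (q i).eval (ξ i)) (Γ N) := by
  letI : MeasureSpace ℝ := ⟨gaussianReal 0 1⟩
  haveI : SigmaFinite (volume : Measure ℝ) := inferInstanceAs (SigmaFinite (gaussianReal 0 1))
  exact MeasureTheory.Integrable.fintype_prod (f := fun i x => (q i).eval x)
    (fun i => integrable_poly (q i))

lemma integral_prod_eval {N : ℕ} (q : Fin N → Polynomial ℝ) :
    ∫ ξ, (∏ i, (q i).eval (ξ i)) ∂(Γ N) = ∏ i, J (q i) := by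
  letI : MeasureSpace ℝ := ⟨gaussianReal 0 1⟩
  haveI : SigmaFinite (volume : Measure ℝ) := inferInstanceAs (SigmaFinite (gaussianReal 0 1))
  exact MeasureTheory.integral_fintype_prod_eq_prod (fun i x => (q i).eval x)

section DoubleSum

variable {N : ℕ} {ι : Type*} [Fintype ι]

lemma sum_prod_mul_pointwise (b b' : ι → ℝ) (q r : ι → Fin N → Polynomial ℝ)
    (ξ : Fin N → ℝ) :
    (∑ u, b u * ∏ i, (q u i).eval (ξ i)) * (∑ v, b' v * ∏ i, (r v i).eval (ξ i))
      = ∑ u, ∑ v, (b u * b' v) * ∏ i, ((q u i) * (r v i)).eval (ξ i) := by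
  rw [Finset.sum_mul_sum]
  refine Finset.sum_congr rfl fun u _ => Finset.sum_congr rfl fun v _ => ?_
  simp only [eval_mul, Finset.prod_mul_distrib]
  ring

lemma integrable_sum_prod_mul (b b' : ι → ℝ) (q r : ι → Fin N → Polynomial ℝ) :
    Integrable (fun ξ : Fin N → ℝ =>
      (∑ u, b u * ∏ i, (q u i).eval (ξ i)) *
      (∑ v, b' v * ∏ i, (r v i).eval (ξ i))) (Γ N) := by
  have : (fun ξ : Fin N → ℝ =>
      (∑ u, b u * ∏ i, (q u i).eval (ξ i)) *
      (∑ v, b' v * ∏ i, (r v i).eval (ξ i)))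
      = fun ξ => ∑ u, ∑ v, (b u * b' v) * ∏ i, ((q u i) * (r v i)).eval (ξ i) := by
    funext ξ; exact sum_prod_mul_pointwise b b' q r ξ
  rw [this]
  exact integrable_finset_sum _ fun u _ => integrable_finset_sum _ fun v _ =>
    (integrable_prod_eval _).const_mul _

lemma integral_sum_prod_mul (b b' : ι → ℝ) (q r : ι → Fin N → Polynomial ℝ) :
    ∫ ξ, (∑ u, b u * ∏ i, (q u i).eval (ξ i)) *
         (∑ v, b' v * ∏ i, (r v i).eval (ξ i)) ∂(Γ N)
      = ∑ u, ∑ v, (b u * b' v) * ∏ i, J ((q u i) * (r v i)) := by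
  rw [show (fun ξ : Fin N → ℝ =>
      (∑ u, b u * ∏ i, (q u i).eval (ξ i)) *
      (∑ v, b' v * ∏ i, (r v i).eval (ξ i)))
      = fun ξ => ∑ u, ∑ v, (b u * b' v) * ∏ i, ((q u i) * (r v i)).eval (ξ i) from
    funext fun ξ => sum_prod_mul_pointwise b b' q r ξ]
  rw [integral_finset_sum _ fun u _ => integrable_finset_sum _ fun v _ =>
    (integrable_prod_eval _).const_mul _]
  refine Finset.sum_congr rfl fun u _ => ?_
  rw [integral_finset_sum _ fun v _ => (integrable_prod_eval _).const_mul _]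
  refine Finset.sum_congr rfl fun v _ => ?_
  rw [integral_const_mul, integral_prod_eval]

end DoubleSum

section Comb

variable {n N : ℕ}

/-- number of indices mapping to `i` -/
def cnt (idx : Fin n → Fin N) : Fin N → ℕ :=
  fun i => (Finset.univ.filter fun j => idx j = i).card

lemma cnt_sum (idx : Fin n → Fin N) : ∑ i, cnt idx i = n := by
  classical
  have := Finset.card_eq_sum_card_fiberwise
    (f := idx) (s := Finset.univ) (t := Finset.univ) (fun x _ => Finset.mem_univ _)
  simpa [cnt] using this.symm

lemma cnt_exists_lt {idx idx' : Fin n → Fin N} (h : cnt idx ≠ cnt idx') :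
    ∃ i, cnt idx i < cnt idx' i := by
  classical
  by_contra hc
  push_neg at hc
  have hle : ∀ i ∈ Finset.univ, cnt idx' i ≤ cnt idx i := fun i _ => hc i
  have hsum : ∑ i, cnt idx' i = ∑ i, cnt idx i := by rw [cnt_sum, cnt_sum]
  have := (Finset.sum_eq_sum_iff_of_le hle).1 hsum
  exact h (funext fun i => ((this i (Finset.mem_univ i)).symm))

lemma prod_cnt (idx : Fin n → Fin N) (ξ : Fin N → ℝ) :
    ∏ j, ξ (idx j) = ∏ i, (ξ i) ^ (cnt idx i) := by
  classical
  rw [← Finset.prod_fiberwise_of_maps_to (g := idx) (fun j _ => Finset.mem_univ (idx j))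
    (fun j => ξ (idx j))]
  refine Finset.prod_congr rfl fun i _ => ?_
  rw [Finset.prod_congr rfl (fun j hj => by rw [(Finset.mem_filter.1 hj).2] :
    ∀ j ∈ Finset.univ.filter fun j => idx j = i, ξ (idx j) = ξ i), Finset.prod_const]
  rfl

lemma exists_perm_of_cnt_eq {idx idx' : Fin n → Fin N} (h : cnt idx = cnt idx') :
    ∃ σ : Equiv.Perm (Fin n), ∀ j, idx' (σ j) = idx j := by
  classical
  have hcard : ∀ i, Fintype.card {j // idx j = i} = Fintype.card {j // idx' j = i} := by
    intro i
    rw [Fintype.card_subtype, Fintype.card_subtype]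
    exact congrFun h i
  let e : ∀ i, {j // idx j = i} ≃ {j // idx' j = i} := fun i => Fintype.equivOfCardEq (hcard i)
  refine ⟨((Equiv.sigmaFiberEquiv idx).symm.trans
    ((Equiv.sigmaCongrRight e).trans (Equiv.sigmaFiberEquiv idx'))), fun j => ?_⟩
  exact ((e _) _).2

end Comb

end WienerAux15

open WienerAux15 Polynomial

/-- Equivalence of norms on a fixed Wiener chaos, finite-dimensional form: the
squared Hilbert–Schmidt norm of a symmetric `n`-multilinear map on `ℝ^N` is
bounded, with a constant depending only on `n`, by the second Gaussian moment of
the associated degree-`n` homogeneous polynomial. -/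
theorem stmt15 (n : ℕ) (hn : 1 ≤ n) :
    ∃ C : ℝ, 0 < C ∧ ∀ N : ℕ, 1 ≤ N →
      ∀ A : MultilinearMap ℝ (fun _ : Fin n => (Fin N → ℝ)) ℝ,
        (∀ (e : Equiv.Perm (Fin n)) (v : Fin n → (Fin N → ℝ)), A (v ∘ e) = A v) →
        ∑ idx : Fin n → Fin N, (A fun j => Pi.single (idx j) 1) ^ 2 ≤
          C * ∫ ξ, (A fun _ => ξ) ^ 2 ∂(Measure.pi fun _ : Fin N => gaussianReal 0 1) := by
  classical
  refine ⟨1, one_pos, fun N _hN A hsym => ?_⟩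
  set a : (Fin n → Fin N) → ℝ := fun idx => A fun j => Pi.single (idx j) 1 with ha
  -- the coefficient only depends on the fiber counts
  have hac : ∀ u v : Fin n → Fin N, cnt u = cnt v → a u = a v := by
    intro u v h
    obtain ⟨σ, hσ⟩ := exists_perm_of_cnt_eq h
    have : (fun j => (Pi.single (v j) (1:ℝ) : Fin N → ℝ)) ∘ σ
        = fun j => (Pi.single (u j) (1:ℝ) : Fin N → ℝ) := by
      funext j
      simp only [Function.comp_apply, hσ j]
    rw [ha]
    simp only
    rw [← hsym σ (fun j => Pi.single (v j) 1), this]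
  -- polynomial families
  set qM : (Fin n → Fin N) → Fin N → Polynomial ℝ :=
    fun u i => X ^ (cnt u i) with hqM
  set qH : (Fin n → Fin N) → Fin N → Polynomial ℝ := fun u i => Hr (cnt u i) with hqH
  set F : (Fin N → ℝ) → ℝ := fun ξ => ∑ u, a u * ∏ i, (qM u i).eval (ξ i) with hF
  set T : (Fin N → ℝ) → ℝ := fun ξ => ∑ u, a u * ∏ i, (qH u i).eval (ξ i) with hT
  -- expansion of the chaos element
  have hA : ∀ ξ : Fin N → ℝ, (A fun _ => ξ) = F ξ := by
    intro ξ
    have hξ : ξ = ∑ i, ξ i • (Pi.single i (1:ℝ) : Fin N → ℝ) := by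
      funext j
      rw [Finset.sum_apply]
      simp [Pi.single_apply]
    calc (A fun _ => ξ) = A (fun _ => ∑ i, ξ i • (Pi.single i (1:ℝ) : Fin N → ℝ)) := by
          rw [← hξ]
      _ = ∑ u : Fin n → Fin N, A (fun j => ξ (u j) • (Pi.single (u j) (1:ℝ) : Fin N → ℝ)) :=
          A.map_sum (g := fun _ i => ξ i • (Pi.single i (1:ℝ) : Fin N → ℝ))
      _ = F ξ := by
          refine Finset.sum_congr rfl fun u _ => ?_
          have h1 : A (fun j => ξ (u j) • (Pi.single (u j) (1:ℝ) : Fin N → ℝ))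
              = (∏ j, ξ (u j)) • A (fun j => (Pi.single (u j) (1:ℝ) : Fin N → ℝ)) :=
            A.map_smul_univ (fun j => ξ (u j)) (fun j => (Pi.single (u j) (1:ℝ) : Fin N → ℝ))
          rw [h1, smul_eq_mul, prod_cnt, mul_comm]
          congr 1
          exact Finset.prod_congr rfl fun i _ => by simp [hqM]
  -- values of the pair integrals
  set w : (Fin n → Fin N) → (Fin n → Fin N) → ℝ :=
    fun u v => if cnt u = cnt v then ∏ i, (Nat.factorial (cnt u i) : ℝ) else 0 with hw
  have hJM : ∀ u v, (∏ i, J (qM u i * qH v i)) = w u v := by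
    intro u v
    by_cases h : cnt u = cnt v
    · rw [hw]; simp only [if_pos h]
      refine Finset.prod_congr rfl fun i _ => ?_
      have : qH v i = Hr (cnt u i) := by rw [hqH]; simp only; rw [← congrFun h i]
      rw [this, hqM]
      simp only
      rw [J_pow_mul_hermite _ _ le_rfl, if_pos rfl]
    · rw [hw]; simp only [if_neg h]
      obtain ⟨i0, hi0⟩ := cnt_exists_lt h
      refine Finset.prod_eq_zero (Finset.mem_univ i0) ?_
      rw [hqM, hqH]
      simp only
      rw [J_pow_mul_hermite _ _ (le_of_lt hi0), if_neg (Nat.ne_of_lt hi0)]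
  have hJH : ∀ u v, (∏ i, J (qH u i * qH v i)) = w u v := by
    intro u v
    by_cases h : cnt u = cnt v
    · rw [hw]; simp only [if_pos h]
      refine Finset.prod_congr rfl fun i _ => ?_
      rw [hqH]
      simp only
      rw [J_hermite_mul_hermite, if_pos (congrFun h i), ← congrFun h i]
    · rw [hw]; simp only [if_neg h]
      have : ∃ i, cnt u i ≠ cnt v i := by
        by_contra hc
        push_neg at hc
        exact h (funext hc)
      obtain ⟨i0, hi0⟩ := this
      refine Finset.prod_eq_zero (Finset.mem_univ i0) ?_
      rw [hqH]
      simp only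
      rw [J_hermite_mul_hermite, if_neg hi0]
  -- the common value
  set S : ℝ := ∑ u, ∑ v, (a u * a v) * w u v with hS
  have hFT : ∫ ξ, F ξ * T ξ ∂(Γ N) = S := by
    rw [hF, hT, integral_sum_prod_mul, hS]
    exact Finset.sum_congr rfl fun u _ => Finset.sum_congr rfl fun v _ => by rw [hJM]
  have hTT : ∫ ξ, T ξ * T ξ ∂(Γ N) = S := by
    rw [hT, integral_sum_prod_mul, hS]
    exact Finset.sum_congr rfl fun u _ => Finset.sum_congr rfl fun v _ => by rw [hJH]
  have h1 : Integrable (fun ξ => F ξ * F ξ) (Γ N) := integrable_sum_prod_mul a a qM qM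
  have h2 : Integrable (fun ξ => F ξ * T ξ) (Γ N) := integrable_sum_prod_mul a a qM qH
  have h3 : Integrable (fun ξ => T ξ * T ξ) (Γ N) := integrable_sum_prod_mul a a qH qH
  -- expand the square
  have hsq : ∫ ξ, (F ξ - T ξ) ^ 2 ∂(Γ N)
      = (∫ ξ, F ξ * F ξ ∂(Γ N)) - 2 * (∫ ξ, F ξ * T ξ ∂(Γ N)) + ∫ ξ, T ξ * T ξ ∂(Γ N) := by
    have hpt : (fun ξ => (F ξ - T ξ) ^ 2)
        = fun ξ => (F ξ * F ξ - 2 * (F ξ * T ξ)) + T ξ * T ξ := by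
      funext ξ; ring
    have e1 : ∫ ξ, ((F ξ * F ξ - 2 * (F ξ * T ξ)) + T ξ * T ξ) ∂(Γ N)
        = (∫ ξ, (F ξ * F ξ - 2 * (F ξ * T ξ)) ∂(Γ N)) + ∫ ξ, T ξ * T ξ ∂(Γ N) :=
      integral_add (h1.sub (h2.const_mul 2)) h3
    have e2 : ∫ ξ, (F ξ * F ξ - 2 * (F ξ * T ξ)) ∂(Γ N)
        = (∫ ξ, F ξ * F ξ ∂(Γ N)) - ∫ ξ, 2 * (F ξ * T ξ) ∂(Γ N) :=
      integral_sub h1 (h2.const_mul 2)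
    have e3 : ∫ ξ, 2 * (F ξ * T ξ) ∂(Γ N) = 2 * ∫ ξ, F ξ * T ξ ∂(Γ N) :=
      integral_const_mul 2 _
    rw [hpt, e1, e2, e3]
  have hsqpos : 0 ≤ ∫ ξ, (F ξ - T ξ) ^ 2 ∂(Γ N) :=
    integral_nonneg fun ξ => sq_nonneg _
  -- lower bound for S
  have hterm : ∀ u v, 0 ≤ (a u * a v) * w u v := by
    intro u v
    by_cases h : cnt u = cnt v
    · rw [(hac u v h).symm, hw]
      simp only [if_pos h]
      refine mul_nonneg (mul_self_nonneg _) (Finset.prod_nonneg fun i _ => ?_)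
      positivity
    · rw [hw]; simp only [if_neg h, mul_zero]
      exact le_rfl
  have hdiag : ∀ u, a u ^ 2 ≤ (a u * a u) * w u u := by
    intro u
    have hwu : w u u = ∏ i, (Nat.factorial (cnt u i) : ℝ) := by
      rw [hw]; simp
    have hw1 : (1:ℝ) ≤ w u u := by
      rw [hwu, ← Nat.cast_prod]
      exact_mod_cast Nat.one_le_iff_ne_zero.2
        (Finset.prod_ne_zero_iff.mpr fun i _ => Nat.factorial_ne_zero _)
    calc a u ^ 2 = (a u * a u) * 1 := by ring
      _ ≤ (a u * a u) * w u u := mul_le_mul_of_nonneg_left hw1 (mul_self_nonneg _)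
  have hlow : ∑ u : Fin n → Fin N, a u ^ 2 ≤ S := by
    rw [hS]
    refine Finset.sum_le_sum fun u _ => ?_
    refine le_trans (hdiag u) ?_
    exact Finset.single_le_sum (fun v _ => hterm u v) (Finset.mem_univ u)
  -- put it together
  have hFF : S ≤ ∫ ξ, F ξ * F ξ ∂(Γ N) := by
    have := hsq
    rw [hFT, hTT] at this
    linarith
  have hgoal : ∫ ξ, (A fun _ => ξ) ^ 2 ∂(Measure.pi fun _ : Fin N => gaussianReal 0 1)
      = ∫ ξ, F ξ * F ξ ∂(Γ N) := by
    refine integral_congr_ae (Filter.Eventually.of_forall fun ξ => ?_)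
    show (A fun _ => ξ) ^ 2 = F ξ * F ξ
    rw [hA ξ]; ring
  rw [one_mul, hgoal]
  exact le_trans hlow hFF
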